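/- arXiv:2210.07872 — 2 statements merged into one kernel-verified Lean document; each statement's English description precedes it below -/
import Mathlib

section
/- Define f(k) = (∏_{j=2}^{d} (d(j-1)+4k)) / ((d-1)! · d^{d-1}) for integer d ≥ 2. Then for every real k > d/2, the derivative satisfies f'(k) ≥ 2(d-1) > 1. -/
open Finset

private lemma aux_prod (d : ℕ) (hd : 2 ≤ d) :
    2 * ∏ j ∈ Finset.Icc 2 d, (j + 1) = Nat.factorial (d + 1) := by
  induction d, hd using Nat.le_induction with
  | base => decide
  | succ n hn ih =>
      rw [Finset.prod_Icc_succ_top (by omega : 2 ≤ n + 1), Nat.factorial_succ, ← ih]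
      ring

private lemma aux_erase (d : ℕ) (hd : 2 ≤ d) (i : ℕ) (hi : i ∈ Finset.Icc 2 d) :
    Nat.factorial d ≤ 2 * ∏ j ∈ (Finset.Icc 2 d).erase i, (j + 1) := by
  have h1 : (i + 1) * ∏ j ∈ (Finset.Icc 2 d).erase i, (j + 1)
      = ∏ j ∈ Finset.Icc 2 d, (j + 1) := Finset.mul_prod_erase _ _ hi
  have h2 := aux_prod d hd
  have hile : i ≤ d := (Finset.mem_Icc.mp hi).2
  have key : (d + 1) * Nat.factorial d
      = 2 * ((i + 1) * ∏ j ∈ (Finset.Icc 2 d).erase i, (j + 1)) := by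
    rw [h1, h2, Nat.factorial_succ]
  have : (d + 1) * Nat.factorial d
      ≤ (d + 1) * (2 * ∏ j ∈ (Finset.Icc 2 d).erase i, (j + 1)) := by
    rw [key]
    have hre : 2 * ((i + 1) * ∏ j ∈ (Finset.Icc 2 d).erase i, (j + 1))
        = (i + 1) * (2 * ∏ j ∈ (Finset.Icc 2 d).erase i, (j + 1)) := by ring
    rw [hre]
    exact Nat.mul_le_mul_right _ (by omega)
  exact Nat.le_of_mul_le_mul_left this (by omega)

/-- For `k > d/2` the derivative of
`f(k) = ∏_{j=2}^d (d(j-1)+4k) / ((d-1)! d^{d-1})` satisfies `f'(k) ≥ 2(d-1) > 1`. -/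
theorem stmt4 (d : ℕ) (hd : 2 ≤ d) (k : ℝ) (hk : (d : ℝ) / 2 < k) :
    deriv (fun k : ℝ =>
        (∏ j ∈ Finset.Icc 2 d, ((d : ℝ) * ((j : ℝ) - 1) + 4 * k))
          / ((Nat.factorial (d - 1) : ℝ) * (d : ℝ) ^ (d - 1))) k
      ≥ 2 * ((d : ℝ) - 1) ∧ (1 : ℝ) < 2 * ((d : ℝ) - 1) := by
  have hd2 : (2 : ℝ) ≤ (d : ℝ) := by exact_mod_cast hd
  have hdpos : (0 : ℝ) < (d : ℝ) := by linarith
  set C : ℝ := (Nat.factorial (d - 1) : ℝ) * (d : ℝ) ^ (d - 1) with hC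
  have hCpos : 0 < C := by
    apply mul_pos
    · exact_mod_cast Nat.factorial_pos _
    · positivity
  -- derivative
  have hderiv : HasDerivAt (fun k : ℝ =>
      (∏ j ∈ Finset.Icc 2 d, ((d : ℝ) * ((j : ℝ) - 1) + 4 * k)) / C)
      ((∑ i ∈ Finset.Icc 2 d,
        (∏ j ∈ (Finset.Icc 2 d).erase i, ((d : ℝ) * ((j : ℝ) - 1) + 4 * k)) • (4 : ℝ)) / C) k := by
    apply HasDerivAt.div_const
    exact HasDerivAt.fun_finsetProd fun i _ => by
      simpa using (((hasDerivAt_id k).const_mul (4 : ℝ)).const_add ((d : ℝ) * ((i : ℝ) - 1)))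
  rw [hC] at hderiv
  constructor
  · rw [hderiv.deriv]
    rw [ge_iff_le, le_div_iff₀ hCpos]
    -- each term of the sum is at least 2*C
    have hterm : ∀ i ∈ Finset.Icc 2 d,
        2 * C ≤ (∏ j ∈ (Finset.Icc 2 d).erase i, ((d : ℝ) * ((j : ℝ) - 1) + 4 * k)) • (4 : ℝ) := by
      intro i hi
      have hcard : ((Finset.Icc 2 d).erase i).card = d - 2 := by
        rw [Finset.card_erase_of_mem hi, Nat.card_Icc]; omega
      -- lower bound each factor by d*(j+1)
      have step1 : ∏ j ∈ (Finset.Icc 2 d).erase i, ((d : ℝ) * ((j : ℝ) + 1))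
          ≤ ∏ j ∈ (Finset.Icc 2 d).erase i, ((d : ℝ) * ((j : ℝ) - 1) + 4 * k) := by
        apply Finset.prod_le_prod
        · intro j _; positivity
        · intro j _
          have : 2 * (d : ℝ) < 4 * k := by linarith
          nlinarith
      have step2 : ∏ j ∈ (Finset.Icc 2 d).erase i, ((d : ℝ) * ((j : ℝ) + 1))
          = (d : ℝ) ^ (d - 2) * ∏ j ∈ (Finset.Icc 2 d).erase i, ((j : ℝ) + 1) := by
        rw [Finset.prod_mul_distrib, Finset.prod_const, hcard]
      have step3 : ∏ j ∈ (Finset.Icc 2 d).erase i, ((j : ℝ) + 1)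
          = ((∏ j ∈ (Finset.Icc 2 d).erase i, (j + 1) : ℕ) : ℝ) := by
        rw [Nat.cast_prod]
        exact Finset.prod_congr rfl fun x _ => by push_cast; ring
      have step4 : (Nat.factorial d : ℝ)
          ≤ 2 * ((∏ j ∈ (Finset.Icc 2 d).erase i, (j + 1) : ℕ) : ℝ) := by
        exact_mod_cast aux_erase d hd i hi
      -- assemble: C = (d-1)! * d^(d-1), and d! = d * (d-1)!, d^(d-1) = d^(d-2) * d
      have hfac : (Nat.factorial d : ℝ) = (d : ℝ) * (Nat.factorial (d - 1) : ℝ) := by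
        have : d = (d - 1) + 1 := by omega
        rw [this, Nat.factorial_succ]; push_cast; ring_nf
      have hpow : (d : ℝ) ^ (d - 1) = (d : ℝ) ^ (d - 2) * (d : ℝ) := by
        have : d - 1 = (d - 2) + 1 := by omega
        rw [this, pow_succ]
      have hdpow : (0:ℝ) < (d : ℝ) ^ (d - 2) := by positivity
      rw [smul_eq_mul, hC, hpow]
      calc 2 * ((Nat.factorial (d - 1) : ℝ) * ((d : ℝ) ^ (d - 2) * (d : ℝ)))
          = 2 * (Nat.factorial d : ℝ) * (d : ℝ) ^ (d - 2) := by rw [hfac]; ring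
        _ ≤ 2 * (2 * ((∏ j ∈ (Finset.Icc 2 d).erase i, (j + 1) : ℕ) : ℝ)) * (d : ℝ) ^ (d - 2) := by
            apply mul_le_mul_of_nonneg_right _ (le_of_lt hdpow)
            linarith
        _ = ((d : ℝ) ^ (d - 2) * ∏ j ∈ (Finset.Icc 2 d).erase i, ((j : ℝ) + 1)) * 4 := by
            rw [step3]; ring
        _ = (∏ j ∈ (Finset.Icc 2 d).erase i, ((d : ℝ) * ((j : ℝ) + 1))) * 4 := by rw [step2]
        _ ≤ (∏ j ∈ (Finset.Icc 2 d).erase i, ((d : ℝ) * ((j : ℝ) - 1) + 4 * k)) * 4 := by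
            linarith
    have hcardI : (Finset.Icc 2 d).card = d - 1 := by rw [Nat.card_Icc]; omega
    have := Finset.card_nsmul_le_sum (Finset.Icc 2 d) _ (2 * C) hterm
    rw [hcardI] at this
    have hcast : ((d - 1 : ℕ) : ℝ) = (d : ℝ) - 1 := by
      have : (1:ℕ) ≤ d := by omega
      push_cast [this]; ring
    calc 2 * ((d : ℝ) - 1) * C = ((d - 1 : ℕ) : ℝ) * (2 * C) := by rw [hcast]; ring
      _ = (d - 1 : ℕ) • (2 * C) := by rw [nsmul_eq_mul]
      _ ≤ _ := this
  · linarith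
end

section
/- For every positive integer m and every n ≥ 2, the number of closed walks of length m starting and ending at a fixed vertex of the infinite n-regular tree, divided by n^m, equals 0 if m is odd, and equals (1/n^m) Σ_{j=1}^{m/2} C(m-j, m/2) · (j/(m-j)) · n^j (n-1)^{m/2-j} if m is even. -/
open Finset

namespace Stmt7Aux


variable {n : ℕ}

abbrev G (n : ℕ) := Monoid.CoprodI (fun _ : Fin n => Multiplicative (ZMod 2))

noncomputable def gen (i : Fin n) : G n :=
  Monoid.CoprodI.of (M := fun _ : Fin n => Multiplicative (ZMod 2)) (i := i)
    (Multiplicative.ofAdd (1 : ZMod 2))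

lemma gen_mul_self (i : Fin n) : gen i * gen i = 1 := by
  rw [gen, ← MonoidHom.map_mul,
    show Multiplicative.ofAdd (1 : ZMod 2) * Multiplicative.ofAdd (1 : ZMod 2) = 1 by decide,
    MonoidHom.map_one]

def step (s : List (Fin n)) (a : Fin n) : List (Fin n) :=
  match s with
  | [] => [a]
  | b :: t => if a = b then t else a :: b :: t

def red (l : List (Fin n)) : List (Fin n) := l.foldl step []

lemma chain'_step {s : List (Fin n)} (a : Fin n) (hs : s.Chain' (· ≠ ·)) :
    (step s a).Chain' (· ≠ ·) := by
  match s with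
  | [] => exact List.isChain_singleton _
  | b :: t =>
    rw [step]
    split
    · exact hs.tail
    · exact List.IsChain.cons_cons (by assumption) hs

lemma chain'_red (l : List (Fin n)) : (red l).Chain' (· ≠ ·) := by
  suffices h : ∀ s : List (Fin n), s.Chain' (· ≠ ·) → (l.foldl step s).Chain' (· ≠ ·) from
    h [] List.isChain_nil
  induction l with
  | nil => exact fun s hs => hs
  | cons a l ih => exact fun s hs => ih _ (chain'_step a hs)

noncomputable def val (s : List (Fin n)) : G n := ((s.reverse.map gen)).prod

lemma val_step (s : List (Fin n)) (a : Fin n) : val (step s a) = val s * gen a := by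
  match s with
  | [] => simp [val, step]
  | b :: t =>
    rw [step]
    split
    · subst a
      simp [val, mul_assoc, gen_mul_self]
    · simp [val, mul_assoc]

lemma val_foldl (l : List (Fin n)) : ∀ s : List (Fin n),
    val (l.foldl step s) = val s * (l.map gen).prod := by
  induction l with
  | nil => simp
  | cons a l ih =>
    intro s
    rw [List.foldl_cons, ih, val_step, List.map_cons, List.prod_cons, mul_assoc]

lemma val_red (l : List (Fin n)) : val (red l) = (l.map gen).prod := by
  rw [red, val_foldl]; simp [val]

def toWord (s : List (Fin n)) (hs : s.Chain' (· ≠ ·)) :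
    Monoid.CoprodI.Word (fun _ : Fin n => Multiplicative (ZMod 2)) where
  toList := s.map fun i => ⟨i, Multiplicative.ofAdd (1 : ZMod 2)⟩
  ne_one := by
    intro l hl
    simp only [List.mem_map] at hl
    obtain ⟨i, _, rfl⟩ := hl
    show Multiplicative.ofAdd (1 : ZMod 2) ≠ 1
    decide
  chain_ne := by
    rw [List.isChain_map]
    exact hs

lemma prod_toWord (s : List (Fin n)) (hs : s.Chain' (· ≠ ·)) :
    (toWord s hs).prod = (s.map gen).prod := by
  rw [Monoid.CoprodI.Word.prod, toWord]
  simp only [List.map_map]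
  rfl

lemma eq_nil_of_prod_eq_one {s : List (Fin n)} (hs : s.Chain' (· ≠ ·))
    (h : (s.map gen).prod = 1) : s = [] := by
  have h2 : (toWord s hs).prod = (Monoid.CoprodI.Word.empty :
      Monoid.CoprodI.Word (fun _ : Fin n => Multiplicative (ZMod 2))).prod := by
    rw [prod_toWord, Monoid.CoprodI.Word.prod_empty, h]
  have h3 : toWord s hs = Monoid.CoprodI.Word.empty := by
    have := (Monoid.CoprodI.Word.equiv
      (M := fun _ : Fin n => Multiplicative (ZMod 2))).symm.injective
    exact this h2
  have h4 := congrArg Monoid.CoprodI.Word.toList h3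
  rw [toWord] at h4
  simpa using h4

lemma chain'_reverse_ne {s : List (Fin n)} (hs : s.Chain' (· ≠ ·)) :
    s.reverse.Chain' (· ≠ ·) := by
  exact List.isChain_reverse.mpr (hs.imp (fun {a b} h => Ne.symm h))

lemma prod_eq_one_iff (l : List (Fin n)) : (l.map gen).prod = 1 ↔ red l = [] := by
  constructor
  · intro h
    rw [← val_red l, val] at h
    have h2 := eq_nil_of_prod_eq_one (chain'_reverse_ne (chain'_red l)) h
    simpa using h2
  · intro h
    rw [← val_red l, h, val]
    simp



def W (n : ℕ) : ℕ → ℕ → ℕ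
  | 0, h => if h = 0 then 1 else 0
  | m+1, 0 => n * W n m 1
  | m+1, h+1 => W n m h + (n-1) * W n m (h+2)

lemma red_concat (l : List (Fin n)) (a : Fin n) : red (l ++ [a]) = step (red l) a := by
  rw [red, red, List.foldl_append, List.foldl_cons, List.foldl_nil]

lemma step_eq_nil_iff (t : List (Fin n)) (a : Fin n) : step t a = [] ↔ t = [a] := by
  match t with
  | [] => simp [step]
  | b :: t' =>
    rw [step]
    split
    · subst a; simp
    · simp_all [eq_comm]

lemma step_eq_cons_iff (t : List (Fin n)) (ht : t.Chain' (· ≠ ·)) (a c : Fin n)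
    (s' : List (Fin n)) (hs : (c :: s').Chain' (· ≠ ·)) :
    step t a = c :: s' ↔ (t = a :: c :: s' ∨ (a = c ∧ t = s')) := by
  match t with
  | [] =>
    simp only [step, List.cons.injEq]
    constructor
    · rintro ⟨rfl, rfl⟩
      exact Or.inr ⟨rfl, rfl⟩
    · rintro (h | ⟨rfl, rfl⟩)
      · exact absurd h (by simp)
      · exact ⟨rfl, rfl⟩
  | b :: t' =>
    rw [step]
    split
    · rename_i hab
      subst hab
      constructor
      · intro h
        exact Or.inl (by rw [h])
      · rintro (h | ⟨rfl, rfl⟩)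
        · simpa using h
        · exact absurd rfl (List.isChain_cons_cons.mp hs).1
    · rename_i hab
      constructor
      · intro h
        simp only [List.cons.injEq] at h
        exact Or.inr ⟨h.1, h.2⟩
      · rintro (h | ⟨rfl, rfl⟩)
        · simp only [List.cons.injEq] at h
          exact absurd h.1.symm hab
        · rfl

lemma count_red (hn : 1 ≤ n) : ∀ (m : ℕ) (s : List (Fin n)), s.Chain' (· ≠ ·) →
    (univ.filter fun w : Fin m → Fin n => red (List.ofFn w) = s).card = W n m s.length := by
  intro m
  induction m with
  | zero =>
    intro s hs
    rcases s with _ | ⟨c, s'⟩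
    · rw [show W n 0 [].length = 1 by rfl]
      rw [Finset.filter_true_of_mem, Finset.card_univ]
      · simp
      · intro w _
        simp [red, List.ofFn_zero]
    · rw [show W n 0 (c :: s').length = 0 by rfl, Finset.card_eq_zero,
        Finset.filter_eq_empty_iff]
      intro w _
      simp [red, List.ofFn_zero]
  | succ m ih =>
    intro s hs
    -- decompose along last coordinate
    have key : (univ.filter fun w : Fin (m+1) → Fin n => red (List.ofFn w) = s).card
        = ∑ a : Fin n, (univ.filter fun w : Fin m → Fin n =>
            step (red (List.ofFn w)) a = s).card := by
      rw [Finset.card_filter,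
        ← Equiv.sum_comp (Fin.snocEquiv (fun _ : Fin (m+1) => Fin n))
          (fun w => if red (List.ofFn w) = s then (1:ℕ) else 0),
        Fintype.sum_prod_type]
      refine Finset.sum_congr rfl fun a _ => ?_
      rw [Finset.card_filter]
      refine Finset.sum_congr rfl fun p _ => ?_
      have hl : List.ofFn (Fin.snocEquiv (fun _ : Fin (m+1) => Fin n) (a, p))
          = List.ofFn p ++ [a] := by
        rw [List.ofFn_succ']
        simp [Fin.snocEquiv, List.concat_eq_append]
      rw [hl, red_concat]
    rw [key]
    rcases s with _ | ⟨c, s'⟩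
    · have : ∀ a : Fin n, (univ.filter fun w : Fin m → Fin n =>
          step (red (List.ofFn w)) a = []).card = W n m 1 := by
        intro a
        rw [show W n m 1 = W n m [a].length by rfl, ← ih [a] (List.isChain_singleton _)]
        congr 1
        ext w
        simp [step_eq_nil_iff]
      simp only [this, Finset.sum_const, Finset.card_univ, Fintype.card_fin, smul_eq_mul]
      rfl
    · have hfib : ∀ a : Fin n, (univ.filter fun w : Fin m → Fin n =>
          step (red (List.ofFn w)) a = c :: s').card
          = (if a = c then W n m s'.length else 0)
            + (if a = c then 0 else W n m (s'.length + 2)) := by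
        intro a
        have hsplit : (univ.filter fun w : Fin m → Fin n =>
            step (red (List.ofFn w)) a = c :: s').card
            = (univ.filter fun w : Fin m → Fin n => a = c ∧ red (List.ofFn w) = s').card
              + (univ.filter fun w : Fin m → Fin n =>
                  red (List.ofFn w) = a :: c :: s').card := by
          rw [← Finset.card_union_of_disjoint]
          · congr 1
            ext w
            simp only [Finset.mem_filter, Finset.mem_union, Finset.mem_univ, true_and]
            rw [step_eq_cons_iff _ (chain'_red _) _ _ _ hs]
            tauto
          · rw [Finset.disjoint_filter]
            rintro w _ ⟨rfl, rfl⟩ h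
            have := congrArg List.length h
            simp at this
            omega
        rw [hsplit]
        congr 1
        · by_cases hac : a = c
          · subst hac
            simp only [true_and, if_pos rfl]
            exact ih s' hs.tail
          · rw [if_neg hac, Finset.card_eq_zero, Finset.filter_eq_empty_iff]
            exact fun w _ h => hac h.1
        · by_cases hac : a = c
          · subst hac
            rw [if_pos rfl, Finset.card_eq_zero, Finset.filter_eq_empty_iff]
            intro w _ h
            have := chain'_red (n := n) (List.ofFn w)
            rw [h] at this
            exact (List.isChain_cons_cons.mp this).1 rfl
          · rw [if_neg hac,
              show s'.length + 2 = (a :: c :: s').length by simp,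
              ← ih (a :: c :: s') (List.isChain_cons_cons.mpr ⟨hac, hs⟩)]
      simp only [hfib, Finset.sum_add_distrib, Finset.sum_ite_eq', Finset.mem_univ, if_pos]
      have hsum2 : (∑ x : Fin n, if x = c then 0 else W n m (s'.length + 2))
          = (n - 1) * W n m (s'.length + 2) := by
        rw [Finset.sum_ite, Finset.sum_const_zero, Finset.sum_const, zero_add, smul_eq_mul]
        congr 1
        have : (univ.filter fun x : Fin n => ¬x = c) = univ.erase c := by
          ext x
          simp [Finset.mem_erase, and_comm, eq_comm]
        rw [this, Finset.card_erase_of_mem (Finset.mem_univ c), Finset.card_univ,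
          Fintype.card_fin]
      rw [hsum2]
      rfl

noncomputable section
noncomputable def q (h k j : ℕ) : ℝ :=
  ((h + j : ℕ) : ℝ) / ((h + 2*k - j : ℕ) : ℝ) * ((h + 2*k - j).choose (h + k))

noncomputable def S (n : ℕ) (h k : ℕ) : ℝ :=
  ∑ j ∈ Finset.range (k+1), q h k j * (n:ℝ)^j * ((n:ℝ)-1)^(k-j)

lemma q_self (h k : ℕ) (hk : 1 ≤ h + k) : q h k k = 1 := by
  have h1 : h + 2*k - k = h + k := by omega
  have h2 : ((h + k : ℕ) : ℝ) ≠ 0 := by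
    have h3 : 0 < h + k := hk
    exact_mod_cast h3.ne'
  rw [q, h1, Nat.choose_self, Nat.cast_one, mul_one, div_self h2]

lemma q_rec (h k j : ℕ) (hj : j < k) :
    q (h+1) k j = q h k j + q (h+2) (k-1) j := by
  have hk : 1 ≤ k := by omega
  have e1 : h + 1 + 2*k - j = (h + 2*k - j) + 1 := by omega
  have e2 : h + 2 + 2*(k-1) - j = h + 2*k - j := by omega
  have e3 : h + 2 + (k - 1) = h + k + 1 := by omega
  have e4 : h + 1 + k = (h + k) + 1 := by omega
  rw [q, q, q, e1, e2, e3, e4]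
  set N := h + 2*k - j with hN
  set a := N.choose (h+k) with ha
  set b := N.choose (h+k+1) with hb
  have pascal : (N+1).choose (h+k+1) = a + b := Nat.choose_succ_succ' N (h+k)
  have key : (b * (h+k+1) : ℕ) = a * (k - j) := by
    have := Nat.choose_succ_right_eq N (h+k)
    rw [← ha, ← hb] at this
    rw [this]
    congr 1
    omega
  have keyR : (b : ℝ) * ((h:ℝ)+(k:ℝ)+1) = (a:ℝ) * ((k:ℝ)-(j:ℝ)) := by
    have := congrArg (Nat.cast (R := ℝ)) key
    push_cast [Nat.cast_sub (le_of_lt hj)] at this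
    linarith [this]
  have hNval : (N : ℝ) = (h:ℝ) + 2*(k:ℝ) - (j:ℝ) := by
    rw [hN]
    push_cast [Nat.cast_sub (by omega : j ≤ h + 2*k)]
    ring
  have hNpos : (0:ℝ) < (N:ℝ) := by
    have : 1 ≤ N := by omega
    exact_mod_cast this
  have hN0 : (N:ℝ) ≠ 0 := ne_of_gt hNpos
  have hN1 : ((N:ℝ)+1) ≠ 0 := by positivity
  rw [pascal]
  push_cast
  field_simp
  linear_combination (-2 : ℝ) * keyR + ((a:ℝ)-(b:ℝ)) * hNval


lemma q_zero (k : ℕ) : q 0 k 0 = 0 := by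
  simp [q]

lemma q_shift (k j : ℕ) (hk : 1 ≤ k) : q 0 k (j+1) = q 1 (k-1) j := by
  have e1 : 0 + 2*k - (j+1) = 1 + 2*(k-1) - j := by omega
  have e2 : 0 + k = 1 + (k-1) := by omega
  rw [q, q, e1, e2]
  push_cast
  ring

lemma W_zero {n : ℕ} : ∀ m h, (m < h ∨ (m + h) % 2 = 1) → W n m h = 0 := by
  intro m
  induction m with
  | zero =>
    intro h hh
    match h with
    | 0 => omega
    | h+1 => rfl
  | succ m ih =>
    intro h hh
    match h with
    | 0 =>
      show n * W n m 1 = 0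
      rw [ih 1 (by omega), mul_zero]
    | h+1 =>
      show W n m h + (n-1) * W n m (h+2) = 0
      rw [ih h (by omega), ih (h+2) (by omega), mul_zero, add_zero]

lemma sum_I (n k : ℕ) (hk : 1 ≤ k) : S n 0 k = (n:ℝ) * S n 1 (k-1) := by
  rw [S, Finset.sum_range_succ', q_zero, zero_mul, zero_mul, add_zero, S, Finset.mul_sum]
  have hkk : k - 1 + 1 = k := by omega
  rw [hkk]
  refine Finset.sum_congr rfl fun j hj => ?_
  rw [q_shift k j hk]
  have e : k - (j+1) = k - 1 - j := by omega
  rw [e]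
  ring

lemma sum_II (n h k : ℕ) (hk : 1 ≤ k) :
    S n (h+1) k = S n h k + ((n:ℝ) - 1) * S n (h+2) (k-1) := by
  rw [S, S, S, Finset.sum_range_succ, Finset.sum_range_succ (n := k),
    q_self (h+1) k (by omega), q_self h k (by omega)]
  have hkk : k - 1 + 1 = k := by omega
  rw [hkk, Finset.mul_sum]
  have hS : ∑ j ∈ Finset.range k, q (h+1) k j * (n:ℝ)^j * ((n:ℝ)-1)^(k-j)
      = ∑ j ∈ Finset.range k, q h k j * (n:ℝ)^j * ((n:ℝ)-1)^(k-j)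
        + ∑ j ∈ Finset.range k, ((n:ℝ)-1) * (q (h+2) (k-1) j * (n:ℝ)^j * ((n:ℝ)-1)^(k-1-j)) := by
    rw [← Finset.sum_add_distrib]
    refine Finset.sum_congr rfl fun j hj => ?_
    have hj' : j < k := Finset.mem_range.mp hj
    rw [q_rec h k j hj']
    have e : k - j = (k - 1 - j) + 1 := by omega
    rw [e, pow_succ]
    ring
  rw [hS]
  ring

lemma W_eq {n : ℕ} (hn : 1 ≤ n) : ∀ m, 1 ≤ m → ∀ h k, m = h + 2*k → (W n m h : ℝ) = S n h k := by
  intro m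
  induction m with
  | zero => omega
  | succ m ih =>
    intro _ h k hm
    match h with
    | 0 =>
      have hk : 1 ≤ k := by omega
      have hm' : m = 1 + 2*(k-1) := by omega
      show ((n * W n m 1 : ℕ) : ℝ) = S n 0 k
      rw [Nat.cast_mul, ih (by omega) 1 (k-1) hm', sum_I n k hk]
    | h+1 =>
      show ((W n m h + (n-1) * W n m (h+2) : ℕ) : ℝ) = S n (h+1) k
      match m, k with
      | 0, k =>
        have hk0 : k = 0 := by omega
        have hh0 : h = 0 := by omega
        subst hk0; subst hh0
        show ((W n 0 0 + (n-1) * W n 0 2 : ℕ) : ℝ) = S n 1 0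
        rw [show W n 0 0 = 1 from rfl, show W n 0 2 = 0 from rfl]
        rw [S]
        simp [q_self 1 0 (by omega)]
      | m+1, 0 =>
        have hmh : m + 1 = h := by omega
        rw [W_zero (m+1) (h+2) (by omega), mul_zero, add_zero,
          ih (by omega) h 0 (by omega)]
        rw [S, S]
        simp [q_self h 0 (by omega), q_self (h+1) 0 (by omega)]
      | m+1, k+1 =>
        rw [Nat.cast_add, Nat.cast_mul,
          ih (by omega) h (k+1) (by omega),
          ih (by omega) (h+2) k (by omega),
          sum_II n h (k+1) (by omega), show k + 1 - 1 = k from rfl]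
        have hc : ((n - 1 : ℕ) : ℝ) = (n:ℝ) - 1 := by
          push_cast [Nat.cast_sub hn]
          ring
        rw [hc]


end
end Stmt7Aux

open Stmt7Aux in
/-- Closed walks of length `m` on the infinite `n`-regular tree, realized as the
Cayley graph of the free product of `n` copies of `ℤ/2`: words `U₁...U_m` in the
`n` order-two generators multiplying to the identity.  Their number divided by
`n^m` is `0` for odd `m`, and given by Kesten's formula for even `m`. -/
theorem stmt7 (n m : ℕ) (hn : 2 ≤ n) (hm : 1 ≤ m) :
    ((Nat.card {w : Fin m → Fin n //
        (List.ofFn (fun i : Fin m =>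
          (Monoid.CoprodI.of (M := fun _ : Fin n => Multiplicative (ZMod 2))
            (i := w i) (Multiplicative.ofAdd (1 : ZMod 2))))).prod = 1} : ℝ)
      / (n : ℝ) ^ m)
    = if Odd m then 0 else
        (1 / (n : ℝ) ^ m) * ∑ j ∈ Finset.Icc 1 (m / 2),
          (Nat.choose (m - j) (m / 2) : ℝ) * ((j : ℝ) / ((m : ℝ) - j))
            * (n : ℝ) ^ j * ((n : ℝ) - 1) ^ (m / 2 - j) := by
  have hiff : ∀ w : Fin m → Fin n,
      (List.ofFn (fun i : Fin m =>
          (Monoid.CoprodI.of (M := fun _ : Fin n => Multiplicative (ZMod 2))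
            (i := w i) (Multiplicative.ofAdd (1 : ZMod 2))))).prod = 1
        ↔ red (List.ofFn w) = [] := by
    intro w
    rw [← prod_eq_one_iff]
    rw [List.map_ofFn]
    rfl
  have hcard : (Nat.card {w : Fin m → Fin n //
      (List.ofFn (fun i : Fin m =>
          (Monoid.CoprodI.of (M := fun _ : Fin n => Multiplicative (ZMod 2))
            (i := w i) (Multiplicative.ofAdd (1 : ZMod 2))))).prod = 1}) = W n m 0 := by
    rw [Nat.card_congr (Equiv.subtypeEquivRight hiff), Nat.card_eq_fintype_card,
      Fintype.card_subtype]
    exact count_red (by omega) m [] List.isChain_nil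
  rw [hcard]
  by_cases hodd : Odd m
  · rw [if_pos hodd, W_zero m 0 (Or.inr (by have := Nat.odd_iff.mp hodd; omega)),
      Nat.cast_zero, zero_div]
  · rw [if_neg hodd]
    have heven : m % 2 = 0 := Nat.even_iff.mp (Nat.not_odd_iff_even.mp hodd)
    set k := m / 2 with hk
    have hm2 : m = 0 + 2 * k := by omega
    rw [W_eq (by omega) m hm 0 k hm2, one_div, inv_mul_eq_div]
    congr 1
    rw [S, Finset.sum_range_succ', q_zero, zero_mul, zero_mul, add_zero,
      ← Finset.Ico_add_one_right_eq_Icc, Finset.sum_Ico_eq_sum_range]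
    refine Finset.sum_congr (by congr 1) fun j hj => ?_
    have hj' : j < k := by
      have := Finset.mem_range.mp hj
      omega
    have e1 : 0 + 2*k - (j+1) = m - (1+j) := by omega
    have e2 : 0 + k = m / 2 := by omega
    have e3 : k - (1+j) = k - (j+1) := by omega
    rw [q, e1, e2, e3, Nat.cast_sub (by omega : 1+j ≤ m)]
    push_cast
    ring
end
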